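/- arXiv:1603.06498 — 2 statements merged into one kernel-verified Lean document; each statement's English description precedes it below -/
import Mathlib

section
/- Let f : ℝ → ℝ be twice continuously differentiable with f > 0, and define k(y) := (σ̂²/2)·f''(y)/f(y) - (β + δ) + (c - βy)·f'(y)/f(y). If y∞ ∈ ℝ satisfies f'(y∞)/f(y∞) = Φ''(y∞)/Φ'(y∞), then k(y∞) = (σ̂²/2)·[ (f'/f)'(y∞) - (Φ''/Φ')'(y∞) ]. In particular, if additionally (f'/f)'(y∞) < (Φ''/Φ')'(y∞), then k(y∞) < 0. -/
open MeasureTheory Real Filter Set Metric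
open scoped ENNReal

/-- `Fa a x = ∫₀^∞ exp(-t² - 2xt) · t^a dt`, a Hermite-type function of negative degree. -/
noncomputable def Fa (a x : ℝ) : ℝ :=
  ∫ t in Set.Ioi (0 : ℝ), Real.exp (-(t ^ 2) - 2 * x * t) * t ^ a

lemma contOn_aux (a x : ℝ) :
    ContinuousOn (fun t : ℝ => Real.exp (-(t ^ 2) - 2 * x * t) * t ^ a) (Set.Ioi 0) := by
  intro t ht
  exact ((Real.continuous_exp.comp (by continuity)).continuousAt.continuousWithinAt.mul
    ((Real.continuousAt_rpow_const t a (Or.inl (ne_of_gt ht))).continuousWithinAt))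

lemma meas_aux (a x : ℝ) :
    AEStronglyMeasurable (fun t : ℝ => Real.exp (-(t ^ 2) - 2 * x * t) * t ^ a)
      (volume.restrict (Set.Ioi 0)) :=
  (contOn_aux a x).aestronglyMeasurable measurableSet_Ioi

lemma integrableOn_aux (a x : ℝ) (ha : -1 < a) :
    IntegrableOn (fun t : ℝ => Real.exp (-(t ^ 2) - 2 * x * t) * t ^ a) (Set.Ioi 0) := by
  have base := integrableOn_rpow_mul_exp_neg_mul_sq (by norm_num : (0:ℝ) < 1/2) ha
  refine Integrable.mono' (base.const_mul (Real.exp (2 * x ^ 2))) (meas_aux a x) ?_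
  filter_upwards [ae_restrict_mem measurableSet_Ioi] with t ht
  have htpos : (0:ℝ) < t := ht
  have h1 : Real.exp (-(t ^ 2) - 2 * x * t) ≤ Real.exp (2 * x ^ 2) * Real.exp (-(1/2) * t ^ 2) := by
    rw [← Real.exp_add]
    apply Real.exp_le_exp.mpr
    nlinarith [sq_nonneg (t + 2 * x)]
  have h2 : (0:ℝ) ≤ t ^ a := Real.rpow_nonneg htpos.le a
  have h3 : 0 < Real.exp (-(t ^ 2) - 2 * x * t) := Real.exp_pos _
  rw [Real.norm_eq_abs, abs_of_nonneg (by positivity)]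
  calc Real.exp (-(t ^ 2) - 2 * x * t) * t ^ a
      ≤ (Real.exp (2 * x ^ 2) * Real.exp (-(1/2) * t ^ 2)) * t ^ a := by
        exact mul_le_mul_of_nonneg_right h1 h2
    _ = Real.exp (2 * x ^ 2) * (t ^ a * Real.exp (-(1/2) * t ^ 2)) := by ring

lemma Fa_pos (a x : ℝ) (ha : -1 < a) : 0 < Fa a x := by
  rw [Fa]
  have hnn : 0 ≤ᵐ[volume.restrict (Set.Ioi 0)]
      fun t : ℝ => Real.exp (-(t ^ 2) - 2 * x * t) * t ^ a := by
    filter_upwards [ae_restrict_mem measurableSet_Ioi] with t ht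
    have : (0:ℝ) < t := ht
    positivity
  rw [integral_pos_iff_support_of_nonneg_ae hnn (integrableOn_aux a x ha)]
  have hsub : Set.Ioi (0:ℝ) ⊆ Function.support fun t => Real.exp (-(t ^ 2) - 2 * x * t) * t ^ a := by
    intro t ht
    have : (0:ℝ) < t := ht
    have : 0 < Real.exp (-(t ^ 2) - 2 * x * t) * t ^ a := by positivity
    exact ne_of_gt this
  calc (0:ℝ≥0∞) < volume.restrict (Set.Ioi 0) (Set.Ioi (0:ℝ)) := by
        rw [Measure.restrict_apply measurableSet_Ioi]
        simp
    _ ≤ _ := measure_mono hsub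

lemma hasDerivAt_Fa (a : ℝ) (ha : -1 < a) (x₀ : ℝ) :
    HasDerivAt (Fa a) (-2 * Fa (a + 1) x₀) x₀ := by
  have ha1 : (-1:ℝ) < a + 1 := by linarith
  set F : ℝ → ℝ → ℝ := fun x t => Real.exp (-(t ^ 2) - 2 * x * t) * t ^ a with hF
  set F' : ℝ → ℝ → ℝ := fun x t => Real.exp (-(t ^ 2) - 2 * x * t) * (-(2 * t)) * t ^ a with hF'
  set bound : ℝ → ℝ := fun t => 2 * (Real.exp (-(t ^ 2) - 2 * (x₀ - 1) * t) * t ^ (a + 1))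
    with hbd
  have key := hasDerivAt_integral_of_dominated_loc_of_deriv_le (F := F) (F' := F')
    (μ := volume.restrict (Set.Ioi 0)) (x₀ := x₀) (bound := bound) (ball_mem_nhds x₀ one_pos)
    (Eventually.of_forall fun x => meas_aux a x)
    (integrableOn_aux a x₀ ha)
    ?_ ?_ ?_ ?_
  · have heq : ∫ t in Set.Ioi (0:ℝ), F' x₀ t = -2 * Fa (a + 1) x₀ := by
      rw [Fa, ← MeasureTheory.integral_const_mul]
      apply setIntegral_congr_fun measurableSet_Ioi
      intro t ht
      have : (0:ℝ) < t := ht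
      rw [hF']
      simp only
      rw [Real.rpow_add_one (ne_of_gt this)]
      ring
    rw [← heq]
    exact key.2
  · -- measurability of F' x₀
    apply AEStronglyMeasurable.mul _ ((continuousOn_id.rpow_const
      (fun t ht => Or.inl (ne_of_gt ht))).aestronglyMeasurable measurableSet_Ioi)
    apply Continuous.aestronglyMeasurable
    exact (Real.continuous_exp.comp (by continuity)).mul (by continuity)
  · -- bound
    filter_upwards [ae_restrict_mem measurableSet_Ioi] with t ht x hx
    have htpos : (0:ℝ) < t := ht
    have hx1 : x₀ - 1 ≤ x := by
      have h := mem_ball_iff_norm.mp hx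
      rw [Real.norm_eq_abs] at h
      have := abs_lt.mp h
      linarith
    have hle : Real.exp (-(t ^ 2) - 2 * x * t) ≤ Real.exp (-(t ^ 2) - 2 * (x₀ - 1) * t) := by
      apply Real.exp_le_exp.mpr; nlinarith
    have hra : (0:ℝ) ≤ t ^ a := Real.rpow_nonneg htpos.le a
    have hnp : F' x t ≤ 0 := by
      rw [hF']; simp only
      have h1 : (0:ℝ) < Real.exp (-(t ^ 2) - 2 * x * t) := Real.exp_pos _
      nlinarith [mul_nonneg (mul_nonneg h1.le (by linarith : (0:ℝ) ≤ 2*t)) hra]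
    rw [Real.norm_eq_abs, abs_of_nonpos hnp, hF', hbd]
    simp only
    rw [Real.rpow_add_one (ne_of_gt htpos)]
    nlinarith [mul_le_mul_of_nonneg_left hle (mul_nonneg (by linarith : (0:ℝ) ≤ 2*t) hra)]
  · -- bound integrable
    exact (integrableOn_aux (a+1) (x₀ - 1) ha1).const_mul 2
  · -- differentiability
    filter_upwards [ae_restrict_mem measurableSet_Ioi] with t ht x hx
    have hg : HasDerivAt (fun x : ℝ => -(t ^ 2) - 2 * x * t) (-(2 * t)) x := by
      have h1 : (fun x : ℝ => -(t ^ 2) - 2 * x * t) = fun x => (-(2 * t)) * x + (-(t ^ 2)) := by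
        funext x; ring
      rw [h1]
      simpa using ((hasDerivAt_id x).const_mul (-(2 * t))).add_const (-(t ^ 2))
    exact (hg.exp.mul_const (t ^ a))

lemma Fa_rec (a : ℝ) (ha : -1 < a) (z : ℝ) :
    2 * Fa (a + 2) z + 2 * z * Fa (a + 1) z = (a + 1) * Fa a z := by
  have ha1 : (0:ℝ) < a + 1 := by linarith
  set h : ℝ → ℝ := fun t => Real.exp (-(t ^ 2) - 2 * z * t) * t ^ (a + 1) with hh
  set h' : ℝ → ℝ := fun t =>
    Real.exp (-(t ^ 2) - 2 * z * t) * (-(2 * t) - 2 * z) * t ^ (a + 1) +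
      Real.exp (-(t ^ 2) - 2 * z * t) * ((a + 1) * t ^ a) with hh'
  -- pointwise form of h' on Ioi 0
  have hform : ∀ t ∈ Set.Ioi (0:ℝ), h' t =
      -2 * (Real.exp (-(t ^ 2) - 2 * z * t) * t ^ (a + 2)) +
        (-(2 * z)) * (Real.exp (-(t ^ 2) - 2 * z * t) * t ^ (a + 1)) +
        (a + 1) * (Real.exp (-(t ^ 2) - 2 * z * t) * t ^ a) := by
    intro t ht
    have htpos : (0:ℝ) < t := ht
    rw [hh']
    simp only
    rw [show a + 2 = (a + 1) + 1 by ring]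
    simp only [Real.rpow_add_one (ne_of_gt htpos)]
    ring
  have hint2 := integrableOn_aux (a + 2) z (by linarith)
  have hint1 := integrableOn_aux (a + 1) z (by linarith)
  have hint0 := integrableOn_aux a z ha
  have h'int : IntegrableOn h' (Set.Ioi 0) := by
    apply IntegrableOn.congr_fun _ (fun t ht => (hform t ht).symm) measurableSet_Ioi
    exact ((hint2.const_mul (-2)).add (hint1.const_mul (-(2 * z)))).add (hint0.const_mul (a + 1))
  have hcont : ContinuousWithinAt h (Set.Ici 0) 0 := by
    apply ContinuousAt.continuousWithinAt
    exact (Real.continuous_exp.comp (by continuity)).continuousAt.mul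
      (Real.continuousAt_rpow_const 0 (a + 1) (Or.inr ha1.le))
  have hderiv : ∀ t ∈ Set.Ioi (0:ℝ), HasDerivAt h (h' t) t := by
    intro t ht
    have htpos : (0:ℝ) < t := ht
    have hg : HasDerivAt (fun t : ℝ => -(t ^ 2) - 2 * z * t) (-(2 * t) - 2 * z) t := by
      have h1 : (fun t : ℝ => -(t ^ 2) - 2 * z * t) =
          fun t => -(t ^ 2) + (-(2 * z)) * t := by funext t; ring
      rw [h1]
      have := ((hasDerivAt_pow 2 t).neg).add ((hasDerivAt_id t).const_mul (-(2 * z)))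
      exact this.congr_deriv (by simp; ring)
    have hpow : HasDerivAt (fun t : ℝ => t ^ (a + 1)) ((a + 1) * t ^ a) t := by
      have := Real.hasDerivAt_rpow_const (x := t) (p := a + 1) (Or.inl (ne_of_gt htpos))
      simpa using this
    exact hg.exp.mul hpow
  have htend : Tendsto h atTop (nhds 0) := by
    apply squeeze_zero' (g := fun t => Real.exp (z ^ 2) * (t ^ (a + 1) * Real.exp (-1 * t)))
    · filter_upwards [eventually_gt_atTop (0:ℝ)] with t ht
      have : (0:ℝ) < t := ht
      rw [hh]; positivity
    · filter_upwards [eventually_ge_atTop (max 1 (1 - 2 * z)), eventually_gt_atTop (0:ℝ)]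
        with t ht htpos
      have h1 : 1 - 2 * z ≤ t := le_trans (le_max_right _ _) ht
      have hexp : Real.exp (-(t ^ 2) - 2 * z * t) ≤ Real.exp (z ^ 2) * Real.exp (-1 * t) := by
        rw [← Real.exp_add]
        apply Real.exp_le_exp.mpr
        nlinarith
      rw [hh]
      simp only
      calc Real.exp (-(t ^ 2) - 2 * z * t) * t ^ (a + 1)
          ≤ (Real.exp (z ^ 2) * Real.exp (-1 * t)) * t ^ (a + 1) :=
            mul_le_mul_of_nonneg_right hexp (Real.rpow_nonneg htpos.le _)
        _ = Real.exp (z ^ 2) * (t ^ (a + 1) * Real.exp (-1 * t)) := by ring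
    · rw [show (0:ℝ) = Real.exp (z ^ 2) * 0 by ring]
      exact (tendsto_rpow_mul_exp_neg_mul_atTop_nhds_zero (a + 1) 1 one_pos).const_mul _
  have hFTC := integral_Ioi_of_hasDerivAt_of_tendsto hcont hderiv h'int htend
  have hzero : h 0 = 0 := by
    rw [hh]; simp [Real.zero_rpow (ne_of_gt ha1)]
  rw [hzero, sub_zero] at hFTC
  -- hFTC : ∫ t in Ioi 0, h' t = 0
  have hsplit : ∫ t in Set.Ioi (0:ℝ), h' t =
      -2 * Fa (a + 2) z + (-(2 * z)) * Fa (a + 1) z + (a + 1) * Fa a z := by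
    have hI2 : Integrable (fun t : ℝ => -2 * (Real.exp (-(t ^ 2) - 2 * z * t) * t ^ (a + 2)))
        (volume.restrict (Set.Ioi 0)) := hint2.const_mul _
    have hI1 : Integrable (fun t : ℝ => -(2 * z) * (Real.exp (-(t ^ 2) - 2 * z * t) * t ^ (a + 1)))
        (volume.restrict (Set.Ioi 0)) := hint1.const_mul _
    have hI0 : Integrable (fun t : ℝ => (a + 1) * (Real.exp (-(t ^ 2) - 2 * z * t) * t ^ a))
        (volume.restrict (Set.Ioi 0)) := hint0.const_mul _
    have hI12 : Integrable (fun t : ℝ =>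
        -2 * (Real.exp (-(t ^ 2) - 2 * z * t) * t ^ (a + 2)) +
          -(2 * z) * (Real.exp (-(t ^ 2) - 2 * z * t) * t ^ (a + 1)))
        (volume.restrict (Set.Ioi 0)) := by exact hI2.add hI1
    rw [setIntegral_congr_fun measurableSet_Ioi hform]
    rw [integral_add hI12 hI0, integral_add hI2 hI1,
      MeasureTheory.integral_const_mul, MeasureTheory.integral_const_mul,
      MeasureTheory.integral_const_mul]
    rw [Fa, Fa, Fa]
  rw [hsplit] at hFTC
  linarith

/-- `Phi β σh δ c x = F_a(u(x))` with `a = δ/β - 1` and `u(x) = (c - βx)/(√β·σ̂)`. -/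
noncomputable def Phi (β σh δ c : ℝ) (x : ℝ) : ℝ :=
  Fa (δ / β - 1) ((c - β * x) / (Real.sqrt β * σh))

/-- `M₁ = (f·Φ' - f'·Φ)/D` with `D = (Φ')² - Φ·Φ''`. -/
noncomputable def M1 (β σh δ c : ℝ) (f : ℝ → ℝ) (y : ℝ) : ℝ :=
  (f y * deriv (Phi β σh δ c) y - deriv f y * Phi β σh δ c y) /
    ((deriv (Phi β σh δ c) y) ^ 2 - Phi β σh δ c y * deriv (deriv (Phi β σh δ c)) y)

/-- `M₂ = (f'·Φ' - f·Φ'')/D` with `D = (Φ')² - Φ·Φ''`. -/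
noncomputable def M2 (β σh δ c : ℝ) (f : ℝ → ℝ) (y : ℝ) : ℝ :=
  (deriv f y * deriv (Phi β σh δ c) y - f y * deriv (deriv (Phi β σh δ c)) y) /
    ((deriv (Phi β σh δ c) y) ^ 2 - Phi β σh δ c y * deriv (deriv (Phi β σh δ c)) y)

/-- At a point `y∞` where `f'/f = Φ''/Φ'`, the quantity
`k(y) = (σ̂²/2)·f''/f - (β+δ) + (c-βy)·f'/f` equals
`(σ̂²/2)·[(f'/f)'(y∞) - (Φ''/Φ')'(y∞)]`; in particular `k(y∞) < 0` if
`(f'/f)'(y∞) < (Φ''/Φ')'(y∞)`. -/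
theorem k_at_yinf (β σh δ c : ℝ) (hβ : 0 < β) (hσ : 0 < σh) (hδ : 0 < δ)
    (f : ℝ → ℝ) (hf : ContDiff ℝ 2 f) (hfpos : ∀ y : ℝ, 0 < f y)
    (yinf : ℝ)
    (hroot : deriv f yinf / f yinf =
      deriv (deriv (Phi β σh δ c)) yinf / deriv (Phi β σh δ c) yinf) :
    let k : ℝ → ℝ := fun y =>
      σh ^ 2 / 2 * (deriv (deriv f) y / f y) - (β + δ) + (c - β * y) * (deriv f y / f y);
    k yinf = σh ^ 2 / 2 *
        (deriv (fun z => deriv f z / f z) yinf -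
          deriv (fun z => deriv (deriv (Phi β σh δ c)) z / deriv (Phi β σh δ c) z) yinf) ∧
      (deriv (fun z => deriv f z / f z) yinf <
          deriv (fun z => deriv (deriv (Phi β σh δ c)) z / deriv (Phi β σh δ c) z) yinf →
        k yinf < 0) := by
  intro k
  set a : ℝ := δ / β - 1 with ha_def
  have ha : (-1:ℝ) < a := by
    have : 0 < δ / β := div_pos hδ hβ
    simp only [ha_def]; linarith
  have ha1 : (-1:ℝ) < a + 1 := by linarith
  have ha2 : (-1:ℝ) < a + 2 := by linarith
  set s : ℝ := Real.sqrt β * σh with hs_def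
  have hs : 0 < s := mul_pos (Real.sqrt_pos.mpr hβ) hσ
  set p : ℝ := 2 * β / s with hp_def
  have hp : 0 < p := by positivity
  -- derivative of x ↦ Fa b ((c - β x)/s)
  have L1 : ∀ (b : ℝ), -1 < b → ∀ x : ℝ,
      HasDerivAt (fun x : ℝ => Fa b ((c - β * x) / s))
        (p * Fa (b + 1) ((c - β * x) / s)) x := by
    intro b hb x
    have hu : HasDerivAt (fun x : ℝ => (c - β * x) / s) (-(β * 1) / s) x :=
      (((hasDerivAt_id x).const_mul β).const_sub c).div_const s
    have := (hasDerivAt_Fa b hb ((c - β * x) / s)).comp x hu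
    exact this.congr_deriv (by rw [hp_def]; ring)
  -- first derivative of Phi
  have hPhi1 : ∀ x : ℝ, HasDerivAt (Phi β σh δ c)
      (p * Fa (a + 1) ((c - β * x) / s)) x := fun x => L1 a ha x
  have hd1 : deriv (Phi β σh δ c) = fun x => p * Fa (a + 1) ((c - β * x) / s) :=
    funext fun x => (hPhi1 x).deriv
  have hPhi2 : ∀ x : ℝ, HasDerivAt (fun x : ℝ => p * Fa (a + 1) ((c - β * x) / s))
      (p * (p * Fa (a + 2) ((c - β * x) / s))) x := by
    intro x
    have := (L1 (a + 1) ha1 x).const_mul p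
    rw [show a + 1 + 1 = a + 2 by ring] at this
    exact this
  have hd2 : deriv (deriv (Phi β σh δ c)) =
      fun x => p * (p * Fa (a + 2) ((c - β * x) / s)) := by
    rw [hd1]; exact funext fun x => (hPhi2 x).deriv
  have hPhi3 : ∀ x : ℝ, HasDerivAt (fun x : ℝ => p * (p * Fa (a + 2) ((c - β * x) / s)))
      (p * (p * (p * Fa (a + 3) ((c - β * x) / s)))) x := by
    intro x
    have := ((L1 (a + 2) ha2 x).const_mul p).const_mul p
    rw [show a + 2 + 1 = a + 3 by ring] at this
    exact this
  set z : ℝ := (c - β * yinf) / s with hz_def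
  set A1 : ℝ := Fa (a + 1) z with hA1_def
  set A2 : ℝ := Fa (a + 2) z with hA2_def
  set A3 : ℝ := Fa (a + 3) z with hA3_def
  have hA1 : 0 < A1 := Fa_pos _ _ ha1
  have hA2 : 0 < A2 := Fa_pos _ _ ha2
  have hA3 : 0 < A3 := Fa_pos _ _ (by linarith)
  have hrec : 2 * A3 + 2 * z * A2 = (a + 2) * A1 := by
    have := Fa_rec (a + 1) ha1 z
    rw [show a + 1 + 2 = a + 3 by ring, show a + 1 + 1 = a + 2 by ring] at this
    rw [hA1_def, hA2_def, hA3_def]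
    linarith
  -- f-side derivatives
  have hf' : ContDiff ℝ 1 (deriv f) := by
    have h2 : ContDiff ℝ ((1 + 1 : ℕ) : WithTop ℕ∞) f := by exact_mod_cast hf
    simpa using ContDiff.iterate_deriv' 1 1 h2
  have hdf : HasDerivAt f (deriv f yinf) yinf :=
    ((hf.differentiable (by norm_num)) yinf).hasDerivAt
  have hdf' : HasDerivAt (deriv f) (deriv (deriv f) yinf) yinf :=
    ((hf'.differentiable one_ne_zero) yinf).hasDerivAt
  have hF0 : 0 < f yinf := hfpos yinf
  have hr : HasDerivAt (fun z => deriv f z / f z)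
      ((deriv (deriv f) yinf * f yinf - deriv f yinf * deriv f yinf) / f yinf ^ 2) yinf :=
    hdf'.div hdf (ne_of_gt hF0)
  -- q-side
  have hq : HasDerivAt (fun x : ℝ =>
        p * (p * Fa (a + 2) ((c - β * x) / s)) / (p * Fa (a + 1) ((c - β * x) / s)))
      ((p * (p * (p * A3)) * (p * A1) - p * (p * A2) * (p * (p * A2))) / (p * A1) ^ 2) yinf := by
    have := (hPhi3 yinf).div (hPhi2 yinf)
      (show p * Fa (a + 1) ((c - β * yinf) / s) ≠ 0 by
        rw [← hz_def, ← hA1_def]; positivity)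
    rw [← hz_def, ← hA1_def, ← hA2_def, ← hA3_def] at this
    exact this
  simp only [hd2] at hroot ⊢
  simp only [hd1] at hroot ⊢
  rw [hr.deriv, hq.deriv]
  rw [← hz_def, ← hA1_def, ← hA2_def] at hroot
  set F0 := f yinf
  set F1 := deriv f yinf
  set F2 := deriv (deriv f) yinf
  have hcz : c - β * yinf = s * z := by rw [hz_def]; field_simp
  have hsq : s ^ 2 = β * σh ^ 2 := by
    rw [hs_def, mul_pow, Real.sq_sqrt hβ.le]
  have hpz : p * s = 2 * β := by rw [hp_def]; field_simp
  have hba : β * (a + 2) = β + δ := by rw [ha_def]; field_simp; ring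
  have h1 : F1 * A1 = p * A2 * F0 := by
    rw [div_eq_div_iff (ne_of_gt hF0) (by positivity : (0:ℝ) < p * A1).ne'] at hroot
    apply mul_left_cancel₀ (ne_of_gt hp)
    linear_combination hroot
  have hmain : σh ^ 2 / 2 * (F2 / F0) - (β + δ) + (c - β * yinf) * (F1 / F0) =
      σh ^ 2 / 2 * ((F2 * F0 - F1 * F1) / F0 ^ 2 -
        (p * (p * (p * A3)) * (p * A1) - p * (p * A2) * (p * (p * A2))) / (p * A1) ^ 2) := by
    rw [hcz]
    have e1 : p ^ 2 * (β * σh ^ 2) = 4 * β ^ 2 := by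
      rw [← hsq]; linear_combination (p * s + 2 * β) * hpz
    have hexp : σh ^ 2 / 2 * p ^ 2 = 2 * β := by
      apply mul_left_cancel₀ (ne_of_gt hβ)
      linear_combination e1 / 2
    clear_value F0 F1 F2 A1 A2 A3 z p s a
    have hF1 : F1 = p * A2 * F0 / A1 := by rw [eq_div_iff hA1.ne']; exact h1
    rw [← sub_eq_zero]
    calc _ = -(β + δ) + (p * s) * z * (A2 / A1) + (σh ^ 2 / 2 * p ^ 2) * (A3 / A1) := by
          rw [hF1]; field_simp; ring
      _ = 0 := by
          rw [hpz, hexp, ← hba]; field_simp; linear_combination β * hrec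
  refine ⟨hmain, fun hlt => ?_⟩
  show σh ^ 2 / 2 * (F2 / F0) - (β + δ) + (c - β * yinf) * (F1 / F0) < 0
  rw [hmain]
  exact mul_neg_of_pos_of_neg (by positivity) (by linarith)
end

section
/- Let f : ℝ → ℝ be twice differentiable with f > 0. (i) If (f'/f)'(y) < (Φ'/Φ)'(y) for all y ∈ ℝ, then there is at most one point y₀ ∈ ℝ with f'(y₀)·Φ(y₀) = f(y₀)·Φ'(y₀). (ii) If (f'/f)'(y) < (Φ''/Φ')'(y) for all y ∈ ℝ, then there is at most one point y∞ ∈ ℝ with f'(y∞)·Φ'(y∞) = f(y∞)·Φ''(y∞). -/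
open MeasureTheory Real Filter

lemma fa_integrable {a : ℝ} (ha : -1 < a) (x : ℝ) :
    IntegrableOn (fun t : ℝ => Real.exp (-(t ^ 2) - 2 * x * t) * t ^ a) (Set.Ioi 0) := by
  have hbase : IntegrableOn (fun t : ℝ => t ^ a * Real.exp (-(1/2) * t ^ 2)) (Set.Ioi 0) :=
    integrableOn_rpow_mul_exp_neg_mul_sq (by norm_num) ha
  refine ((hbase.const_mul (Real.exp (2 * x ^ 2))).mono' ?_ ?_)
  · exact Measurable.aestronglyMeasurable (by fun_prop)
  · filter_upwards [ae_restrict_mem measurableSet_Ioi] with t ht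
    have ht0 : 0 < t := ht
    have h1 : Real.exp (-(t ^ 2) - 2 * x * t) ≤ Real.exp (2 * x ^ 2) * Real.exp (-(1/2) * t ^ 2) := by
      rw [← Real.exp_add, Real.exp_le_exp]
      nlinarith [sq_nonneg (t + 2 * x)]
    have h2 : (0:ℝ) ≤ t ^ a := (Real.rpow_pos_of_pos ht0 a).le
    rw [Real.norm_of_nonneg (mul_nonneg (Real.exp_pos _).le h2)]
    calc Real.exp (-(t ^ 2) - 2 * x * t) * t ^ a
        ≤ (Real.exp (2 * x ^ 2) * Real.exp (-(1/2) * t ^ 2)) * t ^ a :=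
          mul_le_mul_of_nonneg_right h1 h2
      _ = Real.exp (2 * x ^ 2) * (t ^ a * Real.exp (-(1/2) * t ^ 2)) := by ring

lemma fa_pos {a : ℝ} (ha : -1 < a) (x : ℝ) : 0 < Fa a x := by
  rw [Fa, setIntegral_pos_iff_support_of_nonneg_ae]
  · have : (Function.support fun t : ℝ => Real.exp (-(t ^ 2) - 2 * x * t) * t ^ a) ∩ Set.Ioi 0
        = Set.Ioi 0 := by
      rw [Set.inter_eq_right]
      intro t ht
      exact mul_ne_zero (Real.exp_pos _).ne' (Real.rpow_pos_of_pos ht _).ne'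
    rw [this, Real.volume_Ioi, ← ENNReal.ofReal_zero]
    exact ENNReal.ofReal_lt_top
  · filter_upwards [ae_restrict_mem measurableSet_Ioi] with t ht
    exact (mul_pos (Real.exp_pos _) (Real.rpow_pos_of_pos ht _)).le
  · exact fa_integrable ha x

lemma fa_hasDerivAt {a : ℝ} (ha : -1 < a) (x₀ : ℝ) :
    HasDerivAt (Fa a) (-2 * Fa (a + 1) x₀) x₀ := by
  have ha1 : (-1:ℝ) < a + 1 := by linarith
  set M : ℝ := |x₀| + 1 with hM
  have hMpos : 0 < M := by positivity
  have hbd : IntegrableOn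
      (fun t : ℝ => 2 * Real.exp (2 * M ^ 2) * (t ^ (a+1) * Real.exp (-(1/2) * t ^ 2)))
      (Set.Ioi 0) :=
    (integrableOn_rpow_mul_exp_neg_mul_sq (by norm_num) ha1).const_mul _
  have key := hasDerivAt_integral_of_dominated_loc_of_deriv_le (μ := volume.restrict (Set.Ioi 0))
    (F := fun x t => Real.exp (-(t ^ 2) - 2 * x * t) * t ^ a)
    (F' := fun x t => (-2 * t) * (Real.exp (-(t ^ 2) - 2 * x * t) * t ^ a))
    (bound := fun t : ℝ => 2 * Real.exp (2 * M ^ 2) * (t ^ (a+1) * Real.exp (-(1/2) * t ^ 2)))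
    (x₀ := x₀) (Metric.ball_mem_nhds x₀ one_pos)
    (Eventually.of_forall fun x => Measurable.aestronglyMeasurable (by fun_prop))
    (fa_integrable ha x₀)
    (Measurable.aestronglyMeasurable (by fun_prop))
    ?_ hbd ?_
  · have heq : (∫ t in Set.Ioi (0:ℝ), (-2 * t) * (Real.exp (-(t ^ 2) - 2 * x₀ * t) * t ^ a))
        = -2 * Fa (a+1) x₀ := by
      rw [Fa, ← MeasureTheory.integral_const_mul]
      refine setIntegral_congr_fun measurableSet_Ioi fun t ht => ?_
      have : t ^ (a+1) = t ^ a * t := Real.rpow_add_one (ne_of_gt ht) a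
      rw [this]; ring
    rw [heq] at key
    exact key.2
  · filter_upwards [ae_restrict_mem measurableSet_Ioi] with t ht
    intro x hx
    have ht0 : 0 < t := ht
    have hxM : |x| ≤ M := by
      have := abs_sub_abs_le_abs_sub x x₀
      rw [Metric.mem_ball, Real.dist_eq] at hx
      linarith
    have h1 : Real.exp (-(t ^ 2) - 2 * x * t) ≤ Real.exp (2 * M ^ 2) * Real.exp (-(1/2) * t ^ 2) := by
      rw [← Real.exp_add, Real.exp_le_exp]
      have hx2 : x ^ 2 ≤ M ^ 2 := by
        have h := sq_abs x
        nlinarith [abs_nonneg x]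
      nlinarith [sq_nonneg (t + 2 * x)]
    have h2 : (0:ℝ) ≤ t ^ a := (Real.rpow_pos_of_pos ht0 a).le
    have h3 : t ^ (a+1) = t ^ a * t := Real.rpow_add_one (ne_of_gt ht0) a
    have hnp : -2 * t * (Real.exp (-(t ^ 2) - 2 * x * t) * t ^ a) ≤ 0 := by
      nlinarith [mul_nonneg ht0.le (mul_nonneg (Real.exp_pos (-(t ^ 2) - 2 * x * t)).le h2)]
    rw [Real.norm_eq_abs, abs_of_nonpos hnp]
    calc -(-2 * t * (Real.exp (-(t ^ 2) - 2 * x * t) * t ^ a))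
        = (2 * t) * (Real.exp (-(t ^ 2) - 2 * x * t) * t ^ a) := by ring
      _ ≤ (2 * t) * ((Real.exp (2 * M ^ 2) * Real.exp (-(1/2) * t ^ 2)) * t ^ a) := by
          apply mul_le_mul_of_nonneg_left (mul_le_mul_of_nonneg_right h1 h2) (by nlinarith)
      _ = 2 * Real.exp (2 * M ^ 2) * (t ^ (a+1) * Real.exp (-(1/2) * t ^ 2)) := by
          rw [h3]; ring
  · filter_upwards [ae_restrict_mem measurableSet_Ioi] with t _
    intro x _
    have h1 : HasDerivAt (fun x : ℝ => -(t ^ 2) - 2 * x * t) (-(2 * t)) x := by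
      have : HasDerivAt (fun x : ℝ => 2 * x * t) (2 * t) x := by
        simpa using ((hasDerivAt_id x).const_mul 2).mul_const t
      simpa using (hasDerivAt_const x (-(t^2))).fun_sub this
    have := (h1.exp.mul_const (t ^ a))
    exact this.congr_deriv (by ring)


lemma phi_facts {β σh δ c : ℝ} (hβ : 0 < β) (hσ : 0 < σh) (hδ : 0 < δ) :
    (∀ x, 0 < Phi β σh δ c x) ∧ Differentiable ℝ (Phi β σh δ c) ∧
    (∀ x, 0 < deriv (Phi β σh δ c) x) ∧ Differentiable ℝ (deriv (Phi β σh δ c)) ∧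
    (∀ x, 0 < deriv (deriv (Phi β σh δ c)) x) ∧
    Differentiable ℝ (deriv (deriv (Phi β σh δ c))) := by
  have hsβ : 0 < Real.sqrt β := Real.sqrt_pos.mpr hβ
  set k : ℝ := β / (Real.sqrt β * σh) with hkdef
  have hk : 0 < k := div_pos hβ (mul_pos hsβ hσ)
  set u : ℝ → ℝ := fun x => (c - β * x) / (Real.sqrt β * σh) with hudef
  have hu : ∀ x, HasDerivAt u (-k) x := by
    intro x
    have h1 : HasDerivAt (fun x : ℝ => c - β * x) (-β) x := by
      simpa using (hasDerivAt_const x c).fun_sub ((hasDerivAt_id x).const_mul β)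
    have := h1.div_const (Real.sqrt β * σh)
    simpa [hkdef, neg_div] using this
  have hdivpos : 0 < δ / β := div_pos hδ hβ
  have ha : (-1:ℝ) < δ / β - 1 := by linarith
  have ha1 : (-1:ℝ) < δ / β := by linarith
  have ha2 : (-1:ℝ) < δ / β + 1 := by linarith
  have hPhi : ∀ x, HasDerivAt (Phi β σh δ c) (2 * k * Fa (δ / β) (u x)) x := by
    intro x
    have h := (fa_hasDerivAt ha (u x)).comp x (hu x)
    have e : δ / β - 1 + 1 = δ / β := by ring
    rw [e] at h
    have h2 : HasDerivAt (Phi β σh δ c) (-2 * Fa (δ / β) (u x) * -k) x := h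
    convert h2 using 1; ring
  have hderiv : deriv (Phi β σh δ c) = fun x => 2 * k * Fa (δ / β) (u x) :=
    funext fun x => (hPhi x).deriv
  have hPhi' : ∀ x, HasDerivAt (deriv (Phi β σh δ c)) (4 * k ^ 2 * Fa (δ / β + 1) (u x)) x := by
    intro x
    rw [hderiv]
    have h := ((fa_hasDerivAt ha1 (u x)).comp x (hu x)).const_mul (2 * k)
    exact h.congr_deriv (by ring)
  have hderiv2 : deriv (deriv (Phi β σh δ c)) = fun x => 4 * k ^ 2 * Fa (δ / β + 1) (u x) :=
    funext fun x => (hPhi' x).deriv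
  have hPhi'' : ∀ x, HasDerivAt (deriv (deriv (Phi β σh δ c)))
      (8 * k ^ 3 * Fa (δ / β + 1 + 1) (u x)) x := by
    intro x
    rw [hderiv2]
    have h := ((fa_hasDerivAt ha2 (u x)).comp x (hu x)).const_mul (4 * k ^ 2)
    exact h.congr_deriv (by ring)
  refine ⟨fun x => fa_pos ha _, fun x => (hPhi x).differentiableAt, ?_,
    fun x => (hPhi' x).differentiableAt, ?_, fun x => (hPhi'' x).differentiableAt⟩
  · intro x; rw [hderiv]; exact mul_pos (by positivity) (fa_pos (by linarith) _)
  · intro x; rw [hderiv2]; exact mul_pos (by positivity) (fa_pos (by linarith) _)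

lemma uniq_helper (f A B : ℝ → ℝ) (hf : Differentiable ℝ f) (hf' : Differentiable ℝ (deriv f))
    (hfpos : ∀ y, 0 < f y) (hA : Differentiable ℝ A) (hB : Differentiable ℝ B)
    (hBpos : ∀ y, 0 < B y)
    (hyp : ∀ y, deriv (fun z => deriv f z / f z) y < deriv (fun z => A z / B z) y)
    (y₁ y₂ : ℝ) (h₁ : deriv f y₁ * B y₁ = f y₁ * A y₁)
    (h₂ : deriv f y₂ * B y₂ = f y₂ * A y₂) : y₁ = y₂ := by
  have hg : StrictAnti (fun z => deriv f z / f z - A z / B z) := by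
    apply strictAnti_of_deriv_neg
    intro y
    have d1 : DifferentiableAt ℝ (fun z => deriv f z / f z) y :=
      (hf' y).div (hf y) (hfpos y).ne'
    have d2 : DifferentiableAt ℝ (fun z => A z / B z) y := (hA y).div (hB y) (hBpos y).ne'
    rw [deriv_fun_sub d1 d2]
    have := hyp y
    linarith
  have e : ∀ y : ℝ, deriv f y * B y = f y * A y →
      deriv f y / f y - A y / B y = 0 := by
    intro y hy
    have : deriv f y / f y = A y / B y := by
      rw [div_eq_div_iff (hfpos y).ne' (hBpos y).ne']
      linarith
    simp [this]
  exact hg.injective ((e y₁ h₁).trans (e y₂ h₂).symm)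

/-- Uniqueness of the boundary points: (i) under `(f'/f)' < (Φ'/Φ)'` there is at most one
root of `f'·Φ = f·Φ'`; (ii) under `(f'/f)' < (Φ''/Φ')'` there is at most one root of
`f'·Φ' = f·Φ''`. -/
theorem uniqueness_of_boundary_points (β σh δ c : ℝ) (hβ : 0 < β) (hσ : 0 < σh) (hδ : 0 < δ)
    (f : ℝ → ℝ) (hf : Differentiable ℝ f) (hf' : Differentiable ℝ (deriv f))
    (hfpos : ∀ y : ℝ, 0 < f y) :
    ((∀ y : ℝ, deriv (fun z => deriv f z / f z) y <
        deriv (fun z => deriv (Phi β σh δ c) z / Phi β σh δ c z) y) →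
      ∀ y₁ y₂ : ℝ,
        deriv f y₁ * Phi β σh δ c y₁ = f y₁ * deriv (Phi β σh δ c) y₁ →
        deriv f y₂ * Phi β σh δ c y₂ = f y₂ * deriv (Phi β σh δ c) y₂ →
        y₁ = y₂) ∧
    ((∀ y : ℝ, deriv (fun z => deriv f z / f z) y <
        deriv (fun z => deriv (deriv (Phi β σh δ c)) z / deriv (Phi β σh δ c) z) y) →
      ∀ y₁ y₂ : ℝ,
        deriv f y₁ * deriv (Phi β σh δ c) y₁ = f y₁ * deriv (deriv (Phi β σh δ c)) y₁ →
        deriv f y₂ * deriv (Phi β σh δ c) y₂ = f y₂ * deriv (deriv (Phi β σh δ c)) y₂ →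
        y₁ = y₂) := by
  obtain ⟨hP, hPd, hP', hP'd, hP'', hP''d⟩ := phi_facts (c := c) hβ hσ hδ
  constructor
  · intro hyp y₁ y₂ h₁ h₂
    exact uniq_helper f (deriv (Phi β σh δ c)) (Phi β σh δ c) hf hf' hfpos hP'd hPd hP
      hyp y₁ y₂ h₁ h₂
  · intro hyp y₁ y₂ h₁ h₂
    exact uniq_helper f (deriv (deriv (Phi β σh δ c))) (deriv (Phi β σh δ c)) hf hf' hfpos
      hP''d hP'd hP' hyp y₁ y₂ h₁ h₂
end
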